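/- Let λ, μ, ν > 0 and let ∇ be the unique ℝ-bilinear map V × V → V satisfying the Koszul formula 2·h(∇_A B, C) = h(C, [A,B]) + h(B, [C,A]) − h(A, [B,C]) for all A, B, C ∈ V. Then ∇_X X = 0, ∇_X Y = ((−λ²+μ²+ν²)/(λμν))·Z, ∇_X Z = −((−λ²+μ²+ν²)/(λμν))·Y, ∇_Y X = ((−λ²+μ²−ν²)/(λμν))·Z, ∇_Y Y = 0, ∇_Y Z = −((λ²−μ²+ν²)/(λμν))·X, ∇_Z X = ((λ²+μ²−ν²)/(λμν))·Y, ∇_Z Y = ((λ²+μ²−ν²)/(λμν))·X, and ∇_Z Z = 0. -/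
import Mathlib

/-- The Lorentzian scalar product on `ℝ³` with `h(X,X) = −1`, `h(Y,Y) = h(Z,Z) = 1`. -/
def hLor (v w : Fin 3 → ℝ) : ℝ := -(v 0 * w 0) + v 1 * w 1 + v 2 * w 2

theorem levi_civita_lorentzian_dual_space
    (l m n : ℝ) (hl : 0 < l) (hm : 0 < m) (hn : 0 < n)
    (X Y Z : Fin 3 → ℝ) (hX : X = ![1, 0, 0]) (hY : Y = ![0, 1, 0]) (hZ : Z = ![0, 0, 1])
    (bracket : (Fin 3 → ℝ) →ₗ[ℝ] (Fin 3 → ℝ) →ₗ[ℝ] (Fin 3 → ℝ))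
    (halt : ∀ v, bracket v v = 0)
    (hXY : bracket X Y = (2 * n / (l * m)) • Z)
    (hZX : bracket Z X = (2 * m / (l * n)) • Y)
    (hYZ : bracket Y Z = -((2 * l / (m * n)) • X))
    (nabla : (Fin 3 → ℝ) →ₗ[ℝ] (Fin 3 → ℝ) →ₗ[ℝ] (Fin 3 → ℝ))
    (hKoszul : ∀ A B C, 2 * hLor (nabla A B) C =
      hLor C (bracket A B) + hLor B (bracket C A) - hLor A (bracket B C)) :
    nabla X X = 0 ∧
    nabla X Y = ((-l ^ 2 + m ^ 2 + n ^ 2) / (l * m * n)) • Z ∧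
    nabla X Z = -(((-l ^ 2 + m ^ 2 + n ^ 2) / (l * m * n)) • Y) ∧
    nabla Y X = ((-l ^ 2 + m ^ 2 - n ^ 2) / (l * m * n)) • Z ∧
    nabla Y Y = 0 ∧
    nabla Y Z = -(((l ^ 2 - m ^ 2 + n ^ 2) / (l * m * n)) • X) ∧
    nabla Z X = ((l ^ 2 + m ^ 2 - n ^ 2) / (l * m * n)) • Y ∧
    nabla Z Y = ((l ^ 2 + m ^ 2 - n ^ 2) / (l * m * n)) • X ∧
    nabla Z Z = 0 := by
  subst hX hY hZ
  have anti : ∀ a b, bracket b a = -bracket a b := by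
    intro a b
    have h := halt (a + b)
    simp [map_add, halt a, halt b] at h
    linear_combination (norm := module) h
  have hYX : bracket ![0,1,0] ![1,0,0] = -((2 * n / (l * m)) • ![0,0,1]) := by
    rw [anti, hXY]
  have hXZ : bracket ![1,0,0] ![0,0,1] = -((2 * m / (l * n)) • ![0,1,0]) := by
    rw [anti, hZX]
  have hZY : bracket ![0,0,1] ![0,1,0] = (2 * l / (m * n)) • ![1,0,0] := by
    rw [anti, hYZ]; module
  have hXX := halt ![1,0,0]
  have hYY := halt ![0,1,0]
  have hZZ := halt ![0,0,1]
  have hl' : l ≠ 0 := ne_of_gt hl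
  have hm' : m ≠ 0 := ne_of_gt hm
  have hn' : n ≠ 0 := ne_of_gt hn
  have key : ∀ A B v : Fin 3 → ℝ,
      2 * hLor (nabla A B) ![1,0,0] = 2 * hLor v ![1,0,0] →
      2 * hLor (nabla A B) ![0,1,0] = 2 * hLor v ![0,1,0] →
      2 * hLor (nabla A B) ![0,0,1] = 2 * hLor v ![0,0,1] → nabla A B = v := by
    intro A B v h0 h1 h2
    simp [hLor] at h0 h1 h2
    funext i
    fin_cases i <;> simpa using by linarith
  refine ⟨?_, ?_, ?_, ?_, ?_, ?_, ?_, ?_, ?_⟩ <;>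
    (refine key _ _ _ ?_ ?_ ?_ <;> rw [hKoszul] <;>
      simp only [hLor, hXX, hYY, hZZ, hXY, hYX, hXZ, hZX, hYZ, hZY, Pi.smul_apply,
        Pi.neg_apply, Pi.zero_apply, smul_eq_mul, Matrix.cons_val_zero, Matrix.cons_val_one,
        Matrix.head_cons, Matrix.cons_val_two, Matrix.tail_cons] <;>
      (try norm_num) <;> field_simp <;> ring)
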